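/- arXiv:1906.10191 — 2 statements merged into one kernel-verified Lean document; each statement's English description precedes it below -/
import Mathlib

section
/- Along any solution of the three point vortex system in which the points remain distinct, the quantity S = l_{1,2}(t)²/ξ_3 + l_{2,3}(t)²/ξ_1 + l_{3,1}(t)²/ξ_2 is constant in time. -/
noncomputable def perp (x : EuclideanSpace ℝ (Fin 2)) : EuclideanSpace ℝ (Fin 2) :=
  WithLp.toLp 2 ![x 1, -x 0]

noncomputable def K (ε c : ℝ) (x : EuclideanSpace ℝ (Fin 2)) : EuclideanSpace ℝ (Fin 2) :=
  (c / ‖x‖ ^ (3 - ε)) • perp x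

open scoped RealInnerProductSpace

lemma perp_neg (x : EuclideanSpace ℝ (Fin 2)) : perp (-x) = -perp x := by
  ext i; fin_cases i <;> simp [perp]

lemma K_neg (ε c : ℝ) (x : EuclideanSpace ℝ (Fin 2)) : K ε c (-x) = -K ε c x := by
  simp [K, perp_neg, smul_neg]

lemma inner_perp_self (x : EuclideanSpace ℝ (Fin 2)) : ⟪perp x, x⟫ = 0 := by
  simp [PiLp.inner_apply, Fin.sum_univ_two, perp]
  ring

lemma inner_K_self (ε c : ℝ) (x : EuclideanSpace ℝ (Fin 2)) : ⟪K ε c x, x⟫ = 0 := by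
  rw [K, real_inner_smul_left, inner_perp_self, mul_zero]

lemma key (ε c ξ0 ξ1 ξ2 : ℝ) (h0 : ξ0 ≠ 0) (h1 : ξ1 ≠ 0) (h2 : ξ2 ≠ 0)
    (a b : EuclideanSpace ℝ (Fin 2)) :
    (⟪a, (ξ1 • K ε c a + ξ2 • K ε c (a + b)) - (ξ0 • K ε c (-a) + ξ2 • K ε c b)⟫
      + ⟪(ξ1 • K ε c a + ξ2 • K ε c (a + b)) - (ξ0 • K ε c (-a) + ξ2 • K ε c b), a⟫) / ξ2
    + (⟪b, (ξ0 • K ε c (-a) + ξ2 • K ε c b) - (ξ0 • K ε c (-(a + b)) + ξ1 • K ε c (-b))⟫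
      + ⟪(ξ0 • K ε c (-a) + ξ2 • K ε c b) - (ξ0 • K ε c (-(a + b)) + ξ1 • K ε c (-b)), b⟫) / ξ0
    + (⟪-(a + b), (ξ0 • K ε c (-(a + b)) + ξ1 • K ε c (-b)) - (ξ1 • K ε c a + ξ2 • K ε c (a + b))⟫
      + ⟪(ξ0 • K ε c (-(a + b)) + ξ1 • K ε c (-b)) - (ξ1 • K ε c a + ξ2 • K ε c (a + b)), -(a + b)⟫) / ξ1
    = 0 := by
  have hKa := inner_K_self ε c a
  have hKb := inner_K_self ε c b
  have hsum : ⟪K ε c (a + b), a⟫ + ⟪K ε c (a + b), b⟫ = 0 := by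
    rw [← inner_add_right]; exact inner_K_self ε c (a + b)
  simp only [K_neg, inner_sub_left, inner_sub_right, inner_add_left, inner_add_right,
    inner_neg_left, inner_neg_right, real_inner_smul_left, real_inner_smul_right, neg_neg]
  have ca : ⟪a, K ε c a⟫ = 0 := by rw [real_inner_comm]; exact hKa
  have cb : ⟪b, K ε c b⟫ = 0 := by rw [real_inner_comm]; exact hKb
  have cab : ⟪a, K ε c b⟫ = ⟪K ε c b, a⟫ := real_inner_comm _ _
  have cba : ⟪b, K ε c a⟫ = ⟪K ε c a, b⟫ := real_inner_comm _ _
  have cA : ⟪a, K ε c (a + b)⟫ = ⟪K ε c (a + b), a⟫ := real_inner_comm _ _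
  have cB : ⟪b, K ε c (a + b)⟫ = ⟪K ε c (a + b), b⟫ := real_inner_comm _ _
  simp only [ca, cb, hKa, hKb, cab, cba, cA, cB]
  simp only [PiLp.inner_apply, RCLike.inner_apply, conj_trivial, Fin.sum_univ_two] at hsum ⊢
  field_simp
  linear_combination (2 * ξ0 * ξ2 * (ξ0 + ξ1 + ξ2)) * hsum

/-- the quantity `S = l₁₂²/ξ₃ + l₂₃²/ξ₁ + l₃₁²/ξ₂` is constant in time
along solutions of the three point vortex system. -/
theorem stmt_2 (ε c : ℝ) (hε : ε ∈ Set.Ioo (0:ℝ) 1) (hc : 0 < c)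
    (ξ : Fin 3 → ℝ) (hξ : ∀ i, ξ i ≠ 0)
    (x : Fin 3 → ℝ → EuclideanSpace ℝ (Fin 2)) (I : Set ℝ) (hI : IsOpen I)
    (hconn : IsPreconnected I)
    (hdist : ∀ s ∈ I, ∀ i j : Fin 3, i ≠ j → x i s ≠ x j s)
    (hode : ∀ i : Fin 3, ∀ s ∈ I,
      HasDerivAt (x i) (∑ j ∈ Finset.univ.erase i, ξ j • K ε c (x i s - x j s)) s)
    (t s : ℝ) (ht : t ∈ I) (hs : s ∈ I) :
    ‖x 0 t - x 1 t‖ ^ 2 / ξ 2 + ‖x 1 t - x 2 t‖ ^ 2 / ξ 0 + ‖x 2 t - x 0 t‖ ^ 2 / ξ 1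
      = ‖x 0 s - x 1 s‖ ^ 2 / ξ 2 + ‖x 1 s - x 2 s‖ ^ 2 / ξ 0
        + ‖x 2 s - x 0 s‖ ^ 2 / ξ 1 := by
  set F : ℝ → ℝ := fun τ =>
    ‖x 0 τ - x 1 τ‖ ^ 2 / ξ 2 + ‖x 1 τ - x 2 τ‖ ^ 2 / ξ 0 + ‖x 2 τ - x 0 τ‖ ^ 2 / ξ 1 with hF
  have hder : ∀ τ ∈ I, HasDerivAt F 0 τ := by
    intro τ hτ
    have h0 := hode 0 τ hτ
    have h1 := hode 1 τ hτ
    have h2 := hode 2 τ hτ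
    have e0 : (Finset.univ.erase (0 : Fin 3)) = {1, 2} := by decide
    have e1 : (Finset.univ.erase (1 : Fin 3)) = {0, 2} := by decide
    have e2 : (Finset.univ.erase (2 : Fin 3)) = {0, 1} := by decide
    rw [e0, Finset.sum_insert (by decide), Finset.sum_singleton] at h0
    rw [e1, Finset.sum_insert (by decide), Finset.sum_singleton] at h1
    rw [e2, Finset.sum_insert (by decide), Finset.sum_singleton] at h2
    have E1 : x 0 τ - x 2 τ = (x 0 τ - x 1 τ) + (x 1 τ - x 2 τ) := by abel
    have E2 : x 1 τ - x 0 τ = -(x 0 τ - x 1 τ) := by abel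
    have E3 : x 2 τ - x 0 τ = -((x 0 τ - x 1 τ) + (x 1 τ - x 2 τ)) := by abel
    have E4 : x 2 τ - x 1 τ = -(x 1 τ - x 2 τ) := by abel
    rw [E1] at h0
    rw [E2] at h1
    rw [E3, E4] at h2
    have H01 := h0.sub h1
    have H12 := h1.sub h2
    have H20 := h2.sub h0
    have N01 := H01.inner ℝ H01
    have N12 := H12.inner ℝ H12
    have N20 := H20.inner ℝ H20
    simp only [real_inner_self_eq_norm_sq] at N01 N12 N20
    rw [Pi.sub_apply, E3] at N20
    have total := ((N01.div_const (ξ 2)).add (N12.div_const (ξ 0))).add (N20.div_const (ξ 1))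
    rw [show (0 : ℝ) = _ from
      (key ε c (ξ 0) (ξ 1) (ξ 2) (hξ 0) (hξ 1) (hξ 2) (x 0 τ - x 1 τ) (x 1 τ - x 2 τ)).symm]
    exact total
  have hconv : Convex ℝ I := convex_iff_ordConnected.mpr hconn.ordConnected
  have hdiff : DifferentiableOn ℝ F I := fun z hz =>
    ((hder z hz).differentiableAt).differentiableWithinAt
  have hzero : ∀ z ∈ I, fderivWithin ℝ F I z = 0 := by
    intro z hz
    have h := ((hder z hz).hasFDerivAt).hasFDerivWithinAt.fderivWithin (hI.uniqueDiffOn z hz)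
    rw [h]
    ext
    simp
  exact hconv.is_const_of_fderivWithin_eq_zero hdiff hzero ht hs
end

section
/- Along any solution of the three point vortex system in which the points remain distinct, the quantity S_ε = l_{1,2}(t)^{ε-1}/ξ_3 + l_{2,3}(t)^{ε-1}/ξ_1 + l_{3,1}(t)^{ε-1}/ξ_2 is constant in time. -/
open scoped RealInnerProductSpace

lemma inner_perp (a b : EuclideanSpace ℝ (Fin 2)) :
    ⟪a, perp b⟫ = a 0 * b 1 - a 1 * b 0 := by
  simp [perp, PiLp.inner_apply, Fin.sum_univ_two]
  ring

lemma inner_K (ε c : ℝ) (a b : EuclideanSpace ℝ (Fin 2)) :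
    ⟪a, K ε c b⟫ = c * ‖b‖ ^ (ε - 3) * (a 0 * b 1 - a 1 * b 0) := by
  have h : (ε - 3 : ℝ) = -(3 - ε) := by ring
  rw [K, real_inner_smul_right, inner_perp, h, Real.rpow_neg (norm_nonneg b),
    div_eq_mul_inv]

lemma myDerivNormRpow {g : ℝ → EuclideanSpace ℝ (Fin 2)} {g' : EuclideanSpace ℝ (Fin 2)}
    {t : ℝ} (hg : HasDerivAt g g' t) (h0 : g t ≠ 0) (p : ℝ) :
    HasDerivAt (fun u => ‖g u‖ ^ p) (p * ‖g t‖ ^ (p - 2) * ⟪g t, g'⟫) t := by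
  have hq : HasDerivAt (fun u => ⟪g u, g u⟫) (⟪g t, g'⟫ + ⟪g', g t⟫) t :=
    hg.inner (𝕜 := ℝ) hg
  have hqpos : (0:ℝ) < ⟪g t, g t⟫ := by
    rw [real_inner_self_eq_norm_sq]
    exact pow_pos (norm_pos_iff.mpr h0) 2
  have hr : HasDerivAt (fun u : ℝ => u ^ (p/2)) ((p/2) * ⟪g t, g t⟫ ^ (p/2 - 1)) ⟪g t, g t⟫ :=
    Real.hasDerivAt_rpow_const (Or.inl hqpos.ne')
  have hcomp := hr.comp t hq
  rw [Function.comp_def] at hcomp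
  have hnorm : ∀ u, ⟪g u, g u⟫ = ‖g u‖ ^ (2:ℝ) := by
    intro u
    rw [real_inner_self_eq_norm_sq, ← Real.rpow_natCast ‖g u‖ 2]
    norm_num
  have heq : (fun u => (⟪g u, g u⟫ : ℝ) ^ (p/2)) = fun u => ‖g u‖ ^ p := by
    funext u
    rw [hnorm u, ← Real.rpow_mul (norm_nonneg _), show (2:ℝ) * (p/2) = p by ring]
  rw [heq] at hcomp
  refine hcomp.congr_deriv ?_
  rw [hnorm t, ← Real.rpow_mul (norm_nonneg _), real_inner_comm g' (g t)]
  rw [show (2:ℝ) * (p/2 - 1) = p - 2 by ring]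
  ring

/-- the quantity `S_ε = l₁₂^(ε-1)/ξ₃ + l₂₃^(ε-1)/ξ₁ + l₃₁^(ε-1)/ξ₂` is constant in time
along solutions of the three point vortex system. -/
theorem stmt_3 (ε c : ℝ) (hε : ε ∈ Set.Ioo (0:ℝ) 1) (hc : 0 < c)
    (ξ : Fin 3 → ℝ) (hξ : ∀ i, ξ i ≠ 0)
    (x : Fin 3 → ℝ → EuclideanSpace ℝ (Fin 2)) (I : Set ℝ) (hI : IsOpen I)
    (hconn : IsPreconnected I)
    (hdist : ∀ s ∈ I, ∀ i j : Fin 3, i ≠ j → x i s ≠ x j s)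
    (hode : ∀ i : Fin 3, ∀ s ∈ I,
      HasDerivAt (x i) (∑ j ∈ Finset.univ.erase i, ξ j • K ε c (x i s - x j s)) s)
    (t s : ℝ) (ht : t ∈ I) (hs : s ∈ I) :
    ‖x 0 t - x 1 t‖ ^ (ε - 1) / ξ 2 + ‖x 1 t - x 2 t‖ ^ (ε - 1) / ξ 0 + ‖x 2 t - x 0 t‖ ^ (ε - 1) / ξ 1
      = ‖x 0 s - x 1 s‖ ^ (ε - 1) / ξ 2 + ‖x 1 s - x 2 s‖ ^ (ε - 1) / ξ 0
        + ‖x 2 s - x 0 s‖ ^ (ε - 1) / ξ 1 := by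
  set F : ℝ → ℝ := fun u => ‖x 0 u - x 1 u‖ ^ (ε - 1) / ξ 2 + ‖x 1 u - x 2 u‖ ^ (ε - 1) / ξ 0
      + ‖x 2 u - x 0 u‖ ^ (ε - 1) / ξ 1 with hF
  have key : ∀ u ∈ I, HasDerivAt F 0 u := by
    intro u hu
    -- expand the ODE sums
    have e0 : (Finset.univ.erase (0:Fin 3)) = {1, 2} := by decide
    have e1 : (Finset.univ.erase (1:Fin 3)) = {0, 2} := by decide
    have e2 : (Finset.univ.erase (2:Fin 3)) = {0, 1} := by decide
    have h0 := hode 0 u hu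
    have h1 := hode 1 u hu
    have h2 := hode 2 u hu
    rw [e0, Finset.sum_pair (by decide : (1:Fin 3) ≠ 2)] at h0
    rw [e1, Finset.sum_pair (by decide : (0:Fin 3) ≠ 2)] at h1
    rw [e2, Finset.sum_pair (by decide : (0:Fin 3) ≠ 1)] at h2
    have n01 : x 0 u - x 1 u ≠ 0 := sub_ne_zero.mpr (hdist u hu 0 1 (by decide))
    have n12 : x 1 u - x 2 u ≠ 0 := sub_ne_zero.mpr (hdist u hu 1 2 (by decide))
    have n20 : x 2 u - x 0 u ≠ 0 := sub_ne_zero.mpr (hdist u hu 2 0 (by decide))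
    have d01 := (myDerivNormRpow (h0.sub h1) n01 (ε - 1)).div_const (ξ 2)
    have d12 := (myDerivNormRpow (h1.sub h2) n12 (ε - 1)).div_const (ξ 0)
    have d20 := (myDerivNormRpow (h2.sub h0) n20 (ε - 1)).div_const (ξ 1)
    have dF := (d01.add d12).add d20
    rw [hF]
    refine dF.congr_deriv ?_
    -- show the total derivative is zero
    simp only [Pi.sub_apply, inner_sub_right, inner_add_right, real_inner_smul_right, inner_K,
      show ε - 1 - 2 = ε - 3 from by ring]
    rw [norm_sub_rev (x 1 u) (x 0 u), norm_sub_rev (x 2 u) (x 1 u),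
      norm_sub_rev (x 0 u) (x 2 u)]
    simp only [PiLp.sub_apply]
    field_simp [hξ 0, hξ 1, hξ 2]
    ring
  have hconv : Convex ℝ I := hconn.convex
  have hdiff : DifferentiableOn ℝ F I := fun u hu =>
    (key u hu).differentiableAt.differentiableWithinAt
  have hzero : ∀ u ∈ I, fderivWithin ℝ F I u = 0 := by
    intro u hu
    rw [fderivWithin_of_isOpen hI hu, ((key u hu).hasFDerivAt).fderiv]
    refine ContinuousLinearMap.ext fun y => ?_
    simp [ContinuousLinearMap.smulRight_apply]
  exact hconv.is_const_of_fderivWithin_eq_zero hdiff hzero ht hs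
end
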